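/- Let g be a non-elliptic self-embedding of a tree T. Then any two rays R1, R2 of T with g(R1) ⊆ R1 and g(R2) ⊆ R2 are equivalent (lie in the same end). -/

import Mathlib

open SimpleGraph

variable {V : Type*}

/-- `g` is a self-embedding of `G`: injective and adjacency-preserving. -/
def IsEmb (G : SimpleGraph V) (g : V → V) : Prop :=
  Function.Injective g ∧ ∀ u v : V, G.Adj u v → G.Adj (g u) (g v)

/-- A ray in `G`: a one-way infinite path. -/
structure GRay (G : SimpleGraph V) where
  f : ℕ → V
  inj : Function.Injective f
  adj : ∀ n, G.Adj (f n) (f (n + 1))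

/-- Two rays are equivalent (lie in the same end): for every vertex `v` they have
tails avoiding `v` lying in the same component of `G − v`. -/
def RayEquiv (G : SimpleGraph V) (R S : GRay G) : Prop :=
  ∀ v : V, ∃ m n : ℕ, (∀ i, m ≤ i → R.f i ≠ v) ∧ (∀ j, n ≤ j → S.f j ≠ v) ∧
    ∃ w : G.Walk (R.f m) (S.f n), v ∉ w.support

/-- `g` fixes the end represented by the ray `R`: the image ray is equivalent to `R`. -/
def FixesEnd (G : SimpleGraph V) (g : V → V) (R : GRay G) : Prop :=
  ∃ S : GRay G, (∀ n, S.f n = g (R.f n)) ∧ RayEquiv G S R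

def FixesVertex (g : V → V) : Prop := ∃ v, g v = v

/-- `g` fixes an edge setwise (possibly swapping its endpoints). -/
def FixesEdge (G : SimpleGraph V) (g : V → V) : Prop :=
  ∃ u v : V, G.Adj u v ∧ ((g u = u ∧ g v = v) ∨ (g u = v ∧ g v = u))

/-- `g` fixes setwise a non-empty finite subtree of `G`. -/
def FixesFiniteSubtree (G : SimpleGraph V) (g : V → V) : Prop :=
  ∃ S : Set V, S.Nonempty ∧ S.Finite ∧ (G.induce S).Connected ∧ g '' S = S

/-- `R` is a ray with `g(R) ⊆ R`; for non-elliptic `g` its end is the direction `g⁺`. -/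
def DirectionRay (G : SimpleGraph V) (g : V → V) (R : GRay G) : Prop :=
  ∀ n, ∃ m, g (R.f n) = R.f m

/-- `w` lies in the component of `G − x` containing the end of `R`. -/
def InComp (G : SimpleGraph V) (x : V) (R : GRay G) (w : V) : Prop :=
  ∃ m, (∀ i, m ≤ i → R.f i ≠ x) ∧ ∃ p : G.Walk w (R.f m), x ∉ p.support

/-- A sequence of vertices converges to the end represented by `R`. -/
def ConvergesTo (G : SimpleGraph V) (x : ℕ → V) (R : GRay G) : Prop :=
  ∀ v : V, ∃ N : ℕ, ∀ n, N ≤ n → InComp G v R (x n)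

/-- `M` is a submonoid of `Emb(G)`. -/
def IsEmbMonoid (G : SimpleGraph V) (M : Set (V → V)) : Prop :=
  (∀ g ∈ M, IsEmb G g) ∧ (id ∈ M) ∧ ∀ g ∈ M, ∀ h ∈ M, (g ∘ h) ∈ M

/-- The end of `R` is an accumulation point of the orbit of `v0` under `M`:
every basic neighbourhood of the end of `R` meets the orbit. -/
def InLimitSet (G : SimpleGraph V) (M : Set (V → V)) (v0 : V) (R : GRay G) : Prop :=
  ∀ x : V, ∃ g ∈ M, InComp G x R (g v0)

/-- A self-embedding is elliptic if it fixes a non-empty finite subtree. -/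
def Elliptic (G : SimpleGraph V) (g : V → V) : Prop := FixesFiniteSubtree G g


section Stmt6Aux

open Function

variable {G : SimpleGraph V} {g : V → V}

private def rayWalk (R : GRay G) : (n k : ℕ) → G.Walk (R.f n) (R.f (n + k))
  | _, 0 => Walk.nil
  | n, k + 1 => Walk.cons (R.adj n) ((rayWalk R (n+1) k).copy rfl (congrArg R.f (by omega)))

private lemma rayWalk_length (R : GRay G) (n k : ℕ) : (rayWalk R n k).length = k := by
  induction k generalizing n with
  | zero => rfl
  | succ k ih => simp [rayWalk, ih]

private lemma rayWalk_support (R : GRay G) (n k : ℕ) :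
    (rayWalk R n k).support = (List.range' n (k+1)).map R.f := by
  induction k generalizing n with
  | zero => simp [rayWalk]
  | succ k ih => rw [List.range'_succ]; simp [rayWalk, ih]

private lemma rayWalk_isPath (R : GRay G) (n k : ℕ) : (rayWalk R n k).IsPath := by
  rw [Walk.isPath_def, rayWalk_support]
  exact (List.nodup_range').map R.inj

private lemma dist_ray (hT : G.IsTree) (R : GRay G) (n k : ℕ) :
    G.dist (R.f n) (R.f (n + k)) = k := by
  classical
  refine le_antisymm (by simpa [rayWalk_length] using dist_le (rayWalk R n k)) ?_
  obtain ⟨p, hp⟩ := hT.isConnected.exists_walk_length_eq_dist (R.f n) (R.f (n + k))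
  have huniq : (⟨p.bypass, p.bypass_isPath⟩ : G.Path _ _) =
      ⟨rayWalk R n k, rayWalk_isPath R n k⟩ := hT.IsAcyclic.path_unique _ _
  have hb : p.bypass = rayWalk R n k := congrArg Subtype.val huniq
  calc k = p.bypass.length := by rw [hb, rayWalk_length]
    _ ≤ p.length := p.length_bypass_le
    _ = G.dist _ _ := hp

private lemma adj_ray (hT : G.IsTree) (R : GRay G) {a k : ℕ}
    (h : G.Adj (R.f a) (R.f (a + k))) : k = 1 := by
  have h1 : G.dist (R.f a) (R.f (a + k)) ≤ 1 := by
    simpa using dist_le (Walk.cons h Walk.nil)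
  rw [dist_ray hT] at h1
  have hk : k ≠ 0 := by rintro rfl; exact h.ne rfl
  omega

private lemma shift (hT : G.IsTree) (hg : IsEmb G g) (R : GRay G) (hR : DirectionRay G g R) :
    ∃ d, ∀ n, g (R.f n) = R.f (n + d) := by
  choose m hm using hR
  have hmInj : Function.Injective m := by
    intro a b hab
    exact R.inj (hg.1 (by rw [hm a, hm b, hab]))
  have hadj : ∀ n, G.Adj (R.f (m n)) (R.f (m (n+1))) := fun n => by
    rw [← hm n, ← hm (n+1)]; exact hg.2 _ _ (R.adj n)
  have step : ∀ n, m (n+1) = m n + 1 ∨ m n = m (n+1) + 1 := by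
    intro n
    have hne : m n ≠ m (n+1) := fun h => by simpa using hmInj h
    rcases le_or_gt (m n) (m (n+1)) with h | h
    · left
      have h2 : m (n+1) = m n + (m (n+1) - m n) := by omega
      have h3 := hadj n
      rw [h2] at h3
      have := adj_ray hT R h3
      omega
    · right
      have h2 : m n = m (n+1) + (m n - m (n+1)) := by omega
      have h3 := (hadj n).symm
      rw [h2] at h3
      have := adj_ray hT R h3
      omega
  have nodown : ∀ n, ¬ m n = m (n+1) + 1 := by
    intro n h
    have down : ∀ j, m (n+j) = m (n+j+1) + 1 := by
      intro j; induction j with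
      | zero => simpa using h
      | succ j ih =>
        show m (n+j+1) = m (n+j+1+1) + 1
        rcases step (n+j+1) with h2 | h2
        · exfalso
          have he : m (n+j+1+1) = m (n+j) := by omega
          have := hmInj he; omega
        · exact h2
    have hdec : ∀ j, m (n+j) + j = m n := by
      intro j; induction j with
      | zero => simp
      | succ j ih => show m (n+j+1) + (j+1) = m n; have := down j; omega
    have := hdec (m n + 1); omega
  have up : ∀ n, m (n+1) = m n + 1 := fun n => (step n).resolve_right (nodown n)
  have hmn : ∀ n, m n = n + m 0 := by
    intro n; induction n with
    | zero => simp
    | succ n ih => rw [up n, ih]; omega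
  exact ⟨m 0, fun n => by rw [hm n, hmn n]⟩

private lemma elliptic_of_fixed {v : V} (hv : g v = v) : Elliptic G g := by
  refine ⟨{v}, ⟨v, rfl⟩, Set.finite_singleton v, ?_, by rw [Set.image_singleton, hv]⟩
  haveI : Nonempty ({v} : Set V) := ⟨⟨v, rfl⟩⟩
  refine ⟨fun a b => ?_⟩
  have : a = b := Subsingleton.elim a b
  rw [this]

private lemma iterAdj (hg : IsEmb G g) (k : ℕ) {a b : V} (h : G.Adj a b) :
    G.Adj (g^[k] a) (g^[k] b) := by
  induction k with
  | zero => simpa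
  | succ k ih =>
    rw [Function.iterate_succ_apply', Function.iterate_succ_apply']
    exact hg.2 _ _ ih

private def embIter (hg : IsEmb G g) (k : ℕ) : G →g G := ⟨g^[k], fun h => iterAdj hg k h⟩

private lemma iterate_ray (R : GRay G) {d : ℕ} (hd : ∀ n, g (R.f n) = R.f (n + d)) (k n : ℕ) :
    g^[k] (R.f n) = R.f (n + k * d) := by
  induction k with
  | zero => simp
  | succ k ih =>
    rw [Function.iterate_succ_apply', ih, hd]
    congr 1; ring

private lemma dist_iter_le (hT : G.IsTree) (hg : IsEmb G g) (k : ℕ) (a b : V) :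
    G.dist (g^[k] a) (g^[k] b) ≤ G.dist a b := by
  obtain ⟨p, hp⟩ := hT.isConnected.exists_walk_length_eq_dist a b
  calc G.dist (g^[k] a) (g^[k] b) ≤ (p.map (embIter hg k)).length := dist_le _
    _ = p.length := p.length_map _
    _ = G.dist a b := hp

private lemma no_periodic (hT : G.IsTree) (hg : IsEmb G g) (R : GRay G) {d : ℕ}
    (hd : ∀ n, g (R.f n) = R.f (n + d)) (hd1 : 1 ≤ d) (u : V) (k : ℕ)
    (hk : 1 ≤ k) (hu : g^[k] u = u) : False := by
  set c := G.dist u (R.f 0) with hc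
  have hfix : ∀ i, g^[k * i] u = u := by
    intro i
    rw [Function.iterate_mul]
    induction i with
    | zero => rfl
    | succ i ih => rw [Function.iterate_succ_apply', ih, hu]
  have hbd : ∀ i, G.dist u (R.f (k * i * d)) ≤ c := by
    intro i
    have h := dist_iter_le hT hg (k * i) u (R.f 0)
    rwa [hfix i, iterate_ray R hd (k * i) 0, Nat.zero_add] at h
  set i := 2 * c + 1 with hi
  have htri := hT.isConnected.dist_triangle (u := R.f 0) (v := u) (w := R.f (k * i * d))
  have h0 : G.dist (R.f 0) (R.f (k * i * d)) = k * i * d := by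
    simpa using dist_ray hT R 0 (k * i * d)
  have h1 : G.dist (R.f 0) u = c := by rw [dist_comm]
  have h2 := hbd i
  have hbig : 2 * c + 1 ≤ k * i * d :=
    calc 2 * c + 1 = i := rfl
    _ ≤ k * i := Nat.le_mul_of_pos_left _ hk
    _ ≤ k * i * d := Nat.le_mul_of_pos_right _ hd1
  omega

end Stmt6Aux

theorem stmt6 (G : SimpleGraph V) (hT : G.IsTree) (g : V → V) (hg : IsEmb G g)
    (hne : ¬ Elliptic G g) (R1 R2 : GRay G)
    (h1 : DirectionRay G g R1) (h2 : DirectionRay G g R2) : RayEquiv G R1 R2 := by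
  classical
  obtain ⟨d1, hd1⟩ := shift hT hg R1 h1
  obtain ⟨d2, hd2⟩ := shift hT hg R2 h2
  have hd1pos : 1 ≤ d1 := by
    rcases Nat.eq_zero_or_pos d1 with h0 | h
    · exact absurd (elliptic_of_fixed (g := g) (by simpa [h0] using hd1 0)) hne
    · exact h
  have hd2pos : 1 ≤ d2 := by
    rcases Nat.eq_zero_or_pos d2 with h0 | h
    · exact absurd (elliptic_of_fixed (g := g) (by simpa [h0] using hd2 0)) hne
    · exact h
  intro v
  obtain ⟨p⟩ := hT.isConnected (R1.f 0) (R2.f 0)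
  set K : Set ℕ := {k | v ∈ (p.map (embIter hg k)).support} with hK
  have hKfin : K.Finite := by
    have hsub : K ⊆ ⋃ u ∈ {u | u ∈ p.support}, {k | g^[k] u = v} := by
      intro k hk
      simp only [hK, Set.mem_setOf_eq, Walk.support_map, List.mem_map] at hk
      obtain ⟨u, hu, hgu⟩ := hk
      exact Set.mem_biUnion hu hgu
    refine Set.Finite.subset (Set.Finite.biUnion (p.support.finite_toSet) ?_) hsub
    intro u _
    apply Set.Subsingleton.finite
    have key : ∀ a b : ℕ, a ≤ b → g^[a] u = v → g^[b] u = v → a = b := by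
      intro a b hab ha hb
      have heq : g^[a] (g^[b - a] u) = g^[a] u := by
        rw [← Function.iterate_add_apply, show a + (b - a) = b by omega, hb, ha]
      have hper : g^[b - a] u = u := (hg.1.iterate a) heq
      by_contra hne'
      exact no_periodic hT hg R1 hd1 hd1pos u (b - a) (by omega) hper
    intro a ha b hb
    rcases le_total a b with h | h
    · exact key a b h ha hb
    · exact (key b a h hb ha).symm
  obtain ⟨a1, ha1⟩ : ∃ a, ∀ i, a ≤ i → R1.f i ≠ v := by
    by_cases h : ∃ i, R1.f i = v
    · obtain ⟨i0, hi0⟩ := h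
      exact ⟨i0 + 1, fun j hj hjv => by have := R1.inj (hjv.trans hi0.symm); omega⟩
    · exact ⟨0, fun i _ hiv => h ⟨i, hiv⟩⟩
  obtain ⟨a2, ha2⟩ : ∃ a, ∀ i, a ≤ i → R2.f i ≠ v := by
    by_cases h : ∃ i, R2.f i = v
    · obtain ⟨i0, hi0⟩ := h
      exact ⟨i0 + 1, fun j hj hjv => by have := R2.inj (hjv.trans hi0.symm); omega⟩
    · exact ⟨0, fun i _ hiv => h ⟨i, hiv⟩⟩
  obtain ⟨B, hB⟩ := hKfin.bddAbove
  set k := max (max a1 a2) B + 1 with hkdef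
  have hkK : k ∉ K := fun h => by have := hB h; omega
  have hk1 : k ≤ k * d1 := Nat.le_mul_of_pos_right _ hd1pos
  have hk2 : k ≤ k * d2 := Nat.le_mul_of_pos_right _ hd2pos
  refine ⟨k * d1, k * d2, fun i hi => ha1 i (by omega), fun j hj => ha2 j (by omega), ?_⟩
  have e1 : g^[k] (R1.f 0) = R1.f (k * d1) := by
    simpa using iterate_ray R1 hd1 k 0
  have e2 : g^[k] (R2.f 0) = R2.f (k * d2) := by
    simpa using iterate_ray R2 hd2 k 0
  refine ⟨(p.map (embIter hg k)).copy e1 e2, ?_⟩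
  rw [show ((p.map (embIter hg k)).copy e1 e2).support = (p.map (embIter hg k)).support from
    Walk.support_copy _ _ _]
  exact hkK
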